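/- If (Z, Y, H, X) is a pre-wreath structure and X' is a nonempty subset of X, then (Z, Y, H, X') is a pre-wreath structure. -/

import Mathlib

/-- A pre-wreath structure `(Z, Y, H, X)`: `H` is a nontrivial subgroup of `Sym(Z)`,
`X ⊆ Y ⊆ Z`, `X` nonempty, every element of `H` fixes every point outside `Y`,
if `Xh` meets `X` then `h` is the identity on `X`, and every nontrivial `h ∈ H`
moves some set `Xj` (`j ∈ H`). (Images are written with Lean's left action, so the
set `Xh` of the paper is `⇑h '' X`.) -/
def IsPreWreath {Z : Type*} (Y : Set Z) (H : Subgroup (Equiv.Perm Z)) (X : Set Z) : Prop :=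
  H ≠ ⊥ ∧
  (∀ h ∈ H, ∀ z : Z, z ∉ Y → h z = z) ∧
  X ⊆ Y ∧
  X.Nonempty ∧
  (∀ h ∈ H, (⇑h '' X ∩ X).Nonempty → ∀ x ∈ X, h x = x) ∧
  (∀ h ∈ H, h ≠ 1 → ∃ j ∈ H, ⇑h '' (⇑j '' X) ≠ ⇑j '' X)

/-- The carrier `XH = {Xh : h ∈ H}` of a pre-wreath structure. -/
def wreathCarrier {Z : Type*} (H : Subgroup (Equiv.Perm Z)) (X : Set Z) : Set (Set Z) :=
  {A : Set Z | ∃ h ∈ H, A = ⇑h '' X}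

/-- The support of a subgroup of `Sym(Z)`: the points moved by some element. -/
def Supp {Z : Type*} (K : Subgroup (Equiv.Perm Z)) : Set Z :=
  {z : Z | ∃ g ∈ K, g z ≠ z}

/-- If `(Z, Y, H, X)` is a pre-wreath structure and `X'` is a nonempty
subset of `X`, then `(Z, Y, H, X')` is a pre-wreath structure. -/
theorem stmt4 {Z : Type*} (Y : Set Z) (H : Subgroup (Equiv.Perm Z)) (X X' : Set Z)
    (hpw : IsPreWreath Y H X) (hX' : X'.Nonempty) (hsub : X' ⊆ X) :
    IsPreWreath Y H X' := by
  obtain ⟨hnt, hfix, hXY, hXne, hmeet, hmove⟩ := hpw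
  refine ⟨hnt, hfix, hsub.trans hXY, hX', ?_, ?_⟩
  · intro h hH ⟨z, hz1, hz2⟩ x hx
    exact hmeet h hH ⟨z, Set.image_mono hsub hz1, hsub hz2⟩ x (hsub hx)
  · intro h hH hne
    obtain ⟨j, hjH, hj⟩ := hmove h hH hne
    refine ⟨j, hjH, fun heq => hj ?_⟩
    -- j⁻¹hj maps X' onto X'
    have hconj : (j⁻¹ * h * j) ∈ H := H.mul_mem (H.mul_mem (H.inv_mem hjH) hH) hjH
    have himg : ⇑(j⁻¹ * h * j) '' X' = X' := by
      have h1 : ⇑(j⁻¹ * h * j) '' X' = ⇑j⁻¹ '' (⇑h '' (⇑j '' X')) := by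
        simp [Set.image_image, Equiv.Perm.coe_mul]
      rw [h1, heq, ← Set.image_comp]
      simp
    obtain ⟨x0, hx0⟩ := hX'
    have hmeet' : (⇑(j⁻¹ * h * j) '' X ∩ X).Nonempty := by
      refine ⟨x0, ?_, hsub hx0⟩
      rw [← himg] at hx0
      exact Set.image_mono hsub hx0
    have hfixX := hmeet (j⁻¹ * h * j) hconj hmeet'
    ext z
    constructor
    · rintro ⟨_, ⟨x, hxX, rfl⟩, rfl⟩
      refine ⟨x, hxX, ?_⟩
      have := hfixX x hxX
      simp only [Equiv.Perm.coe_mul, Function.comp_apply] at this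
      have : h (j x) = j x := by
        have := congrArg j this
        simpa using this
      exact this.symm
    · rintro ⟨x, hxX, rfl⟩
      refine ⟨j x, ⟨x, hxX, rfl⟩, ?_⟩
      have := hfixX x hxX
      simp only [Equiv.Perm.coe_mul, Function.comp_apply] at this
      have := congrArg j this
      simpa using this
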